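/- Let E be a real inner product space and let F : E → ℝ be differentiable with C-Lipschitz gradient and bounded below by F* ∈ ℝ. Fix τ > 0, G ≥ 0, G' ≥ 0, b ≥ 0, and set τ_n = τ/√(n+1). Let (h_n)_{n≥0} be vectors in E and define θ_{n+1} = θ_n − τ_n h_n from θ₀ ∈ E. Suppose for every n: ‖h_n‖ ≤ G, ‖h_n − ∇F(θ_n)‖ ≤ b, and ‖∇F(θ_n)‖ ≤ G'. Then for every N ≥ 1: (1/N) Σ_{n=0}^{N−1} ‖∇F(θ_n)‖² ≤ (F(θ₀) − F*)/(τ √N) + (C G² τ / 2)(log N + 1)/√N + 2 G' b. -/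

import Mathlib

open Finset RealInnerProductSpace

private lemma sum_inv_sqrt_le (N : ℕ) :
    ∑ n ∈ Finset.range N, (1 : ℝ) / Real.sqrt (n + 1) ≤ 2 * Real.sqrt N := by
  induction N with
  | zero => simp
  | succ N ih =>
    rw [Finset.sum_range_succ]
    set a := Real.sqrt N with ha
    set b := Real.sqrt ((N:ℝ) + 1) with hb
    have hb2 : b * b = (N:ℝ) + 1 := Real.mul_self_sqrt (by positivity)
    have ha2 : a * a = (N:ℝ) := Real.mul_self_sqrt (by positivity)
    have hbpos : 0 < b := Real.sqrt_pos.2 (by positivity)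
    have hann : 0 ≤ a := Real.sqrt_nonneg _
    have key : (1 : ℝ) / b ≤ 2 * b - 2 * a := by
      rw [div_le_iff₀ hbpos]
      nlinarith [sq_nonneg (b - a)]
    push_cast
    linarith

private lemma sum_inv_le_log (N : ℕ) :
    ∑ n ∈ Finset.range N, (1 : ℝ) / (n + 1) ≤ Real.log N + 1 := by
  have h1 := harmonic_le_one_add_log N
  have hh : (harmonic N : ℝ) = ∑ n ∈ Finset.range N, (1 : ℝ) / (n + 1) := by
    rw [harmonic]; push_cast; simp [one_div]
  rw [hh] at h1; linarith

private lemma descent_lemma {E : Type*} [NormedAddCommGroup E] [InnerProductSpace ℝ E]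
    (F : E → ℝ) (F' : E → E)
    (hF : ∀ x, HasFDerivAt F (InnerProductSpace.toDualMap ℝ E (F' x)) x)
    (C : ℝ) (hLip : ∀ x y, ‖F' x - F' y‖ ≤ C * ‖x - y‖) (x v : E) :
    F (x + v) ≤ F x + ⟪F' x, v⟫ + C / 2 * ‖v‖ ^ 2 := by
  set c : ℝ := ⟪F' x, v⟫ with hc
  set g : ℝ → ℝ := fun t => F (x + t • v) - t * c - C / 2 * ‖v‖ ^ 2 * t ^ 2 with hg
  have hderiv : ∀ t : ℝ, HasDerivAt g (⟪F' (x + t • v), v⟫ - c - C * ‖v‖ ^ 2 * t) t := by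
    intro t
    have hline : HasDerivAt (fun t : ℝ => x + t • v) v t := by
      simpa using ((hasDerivAt_id t).smul_const v).const_add x
    have h1 : HasDerivAt (fun t : ℝ => F (x + t • v)) (⟪F' (x + t • v), v⟫) t := by
      have := (hF (x + t • v)).comp_hasDerivAt t hline
      simpa [InnerProductSpace.toDualMap_apply_apply, Function.comp_def] using this
    have h2 : HasDerivAt (fun t : ℝ => t * c) c t := by
      simpa using (hasDerivAt_id t).mul_const c
    have h3 : HasDerivAt (fun t : ℝ => C / 2 * ‖v‖ ^ 2 * t ^ 2) (C / 2 * ‖v‖ ^ 2 * (2 * t)) t := by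
      have := (hasDerivAt_pow 2 t).const_mul (C / 2 * ‖v‖ ^ 2)
      simpa [mul_comm, mul_assoc] using this
    have := (h1.sub h2).sub h3
    refine HasDerivAt.congr_deriv this ?_
    ring
  have hanti : AntitoneOn g (Set.Icc 0 1) := by
    apply antitoneOn_of_deriv_nonpos (convex_Icc 0 1)
    · exact fun t _ => ((hderiv t).differentiableAt).continuousAt.continuousWithinAt
    · intro t ht
      exact ((hderiv t).differentiableAt).differentiableWithinAt
    · intro t ht
      rw [interior_Icc] at ht
      rw [(hderiv t).deriv]
      have hcs : ⟪F' (x + t • v) - F' x, v⟫ ≤ ‖F' (x + t • v) - F' x‖ * ‖v‖ :=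
        real_inner_le_norm _ _
      have hl : ‖F' (x + t • v) - F' x‖ ≤ C * ‖t • v‖ := by
        simpa using hLip (x + t • v) x
      have hnt : ‖t • v‖ = t * ‖v‖ := by
        rw [norm_smul, Real.norm_eq_abs, abs_of_pos ht.1]
      have hsplit : ⟪F' (x + t • v), v⟫ - c = ⟪F' (x + t • v) - F' x, v⟫ := by
        rw [inner_sub_left, hc]
      have : ⟪F' (x + t • v), v⟫ - c ≤ C * (t * ‖v‖) * ‖v‖ := by
        rw [hsplit]
        calc ⟪F' (x + t • v) - F' x, v⟫ ≤ ‖F' (x + t • v) - F' x‖ * ‖v‖ := hcs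
          _ ≤ C * ‖t • v‖ * ‖v‖ := by
              apply mul_le_mul_of_nonneg_right hl (norm_nonneg _)
          _ = C * (t * ‖v‖) * ‖v‖ := by rw [hnt]
      nlinarith [this]
  have := hanti (Set.mem_Icc.2 ⟨le_refl 0, zero_le_one⟩) (Set.mem_Icc.2 ⟨zero_le_one, le_refl 1⟩)
    zero_le_one
  simp only [hg, zero_smul, add_zero, one_smul] at this
  norm_num at this
  linarith

/-- Abstract core of Theorem 3: gradient descent with step sizes `τ_n = τ/√(n+1)`
and persistent gradient-approximation bias `b` on a function bounded below with
`C`-Lipschitz gradient satisfies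
`(1/N) Σ_{n<N} ‖∇F(θ_n)‖² ≤ (F(θ₀) − F*)/(τ√N) + (C G² τ/2)(log N + 1)/√N + 2 G' b`. -/
theorem biased_gradient_descent_rate
    {E : Type*} [NormedAddCommGroup E] [InnerProductSpace ℝ E]
    (F : E → ℝ) (F' : E → E) (hF : ∀ x, HasFDerivAt F (InnerProductSpace.toDualMap ℝ E (F' x)) x)
    (C : ℝ) (hC : 0 ≤ C) (hLip : ∀ x y, ‖F' x - F' y‖ ≤ C * ‖x - y‖)
    (Fstar : ℝ) (hFstar : ∀ x, Fstar ≤ F x)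
    (τ : ℝ) (hτ : 0 < τ) (G G' b : ℝ) (hG : 0 ≤ G) (hG' : 0 ≤ G') (hb : 0 ≤ b)
    (h : ℕ → E)
    (θ : ℕ → E) (hθ : ∀ n, θ (n + 1) = θ n - (τ / Real.sqrt (n + 1)) • h n)
    (hhG : ∀ n, ‖h n‖ ≤ G)
    (hbias : ∀ n, ‖h n - F' (θ n)‖ ≤ b)
    (hgrad : ∀ n, ‖F' (θ n)‖ ≤ G') :
    ∀ N : ℕ, 1 ≤ N →
      (1 / (N : ℝ)) * ∑ n ∈ Finset.range N, ‖F' (θ n)‖ ^ 2 ≤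
        (F (θ 0) - Fstar) / (τ * Real.sqrt N) +
          (C * G ^ 2 * τ / 2) * (Real.log N + 1) / Real.sqrt N + 2 * G' * b := by
  intro N hN
  have hNpos : (0:ℝ) < N := by exact_mod_cast hN
  have hsN : (0:ℝ) < Real.sqrt N := Real.sqrt_pos.2 hNpos
  -- per-step inequality
  have key : ∀ n ∈ Finset.range N,
      (τ / Real.sqrt N) * ‖F' (θ n)‖ ^ 2 ≤
        (F (θ n) - F (θ (n + 1))) + C * G ^ 2 * τ ^ 2 / 2 * (1 / ((n:ℝ) + 1))
          + G' * b * τ * (1 / Real.sqrt ((n:ℝ) + 1)) := by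
    intro n hn
    rw [Finset.mem_range] at hn
    set t : ℝ := τ / Real.sqrt ((n:ℝ) + 1) with htdef
    have hsn : (0:ℝ) < Real.sqrt ((n:ℝ) + 1) := Real.sqrt_pos.2 (by positivity)
    have htpos : 0 < t := div_pos hτ hsn
    have ht2 : t ^ 2 = τ ^ 2 * (1 / ((n:ℝ) + 1)) := by
      rw [htdef, div_pow, Real.sq_sqrt (by positivity : (0:ℝ) ≤ (n:ℝ) + 1)]
      ring
    have hdesc := descent_lemma F F' hF C hLip (θ n) (-(t • h n))
    have hstep : θ n + (-(t • h n)) = θ (n + 1) := by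
      rw [hθ n, sub_eq_add_neg]
    rw [hstep] at hdesc
    have hin : ⟪F' (θ n), -(t • h n)⟫ = -(t * ⟪F' (θ n), h n⟫) := by
      rw [inner_neg_right, real_inner_smul_right]
    have hnn : ‖-(t • h n)‖ ^ 2 = t ^ 2 * ‖h n‖ ^ 2 := by
      rw [norm_neg, norm_smul, Real.norm_eq_abs, abs_of_pos htpos, mul_pow]
    rw [hin, hnn] at hdesc
    have hip : ‖F' (θ n)‖ ^ 2 - G' * b ≤ ⟪F' (θ n), h n⟫ := by
      have hsplit : ⟪F' (θ n), h n⟫ = ‖F' (θ n)‖ ^ 2 + ⟪F' (θ n), h n - F' (θ n)⟫ := by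
        rw [inner_sub_right, real_inner_self_eq_norm_sq]; ring
      have habs : |⟪F' (θ n), h n - F' (θ n)⟫| ≤ ‖F' (θ n)‖ * ‖h n - F' (θ n)‖ :=
        abs_real_inner_le_norm _ _
      have hub : ‖F' (θ n)‖ * ‖h n - F' (θ n)‖ ≤ G' * b :=
        mul_le_mul (hgrad n) (hbias n) (norm_nonneg _) hG'
      have := (abs_le.1 habs).1
      linarith [hsplit]
    have hh2 : ‖h n‖ ^ 2 ≤ G ^ 2 := by
      nlinarith [hhG n, norm_nonneg (h n)]
    have htN : τ / Real.sqrt N ≤ t := by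
      rw [htdef]
      have hle : Real.sqrt ((n:ℝ) + 1) ≤ Real.sqrt N :=
        Real.sqrt_le_sqrt (by exact_mod_cast Nat.succ_le_of_lt hn)
      gcongr
    have A : t * (‖F' (θ n)‖ ^ 2 - G' * b) ≤ t * ⟪F' (θ n), h n⟫ :=
      mul_le_mul_of_nonneg_left hip htpos.le
    have B : C / 2 * (t ^ 2 * ‖h n‖ ^ 2) ≤ C * G ^ 2 * τ ^ 2 / 2 * (1 / ((n:ℝ) + 1)) := by
      rw [ht2]
      have h1 := mul_le_mul_of_nonneg_left hh2
        (show (0:ℝ) ≤ C / 2 * (τ ^ 2 * (1 / ((n:ℝ) + 1))) by positivity)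
      nlinarith [h1]
    have T : (τ / Real.sqrt N) * ‖F' (θ n)‖ ^ 2 ≤ t * ‖F' (θ n)‖ ^ 2 :=
      mul_le_mul_of_nonneg_right htN (sq_nonneg _)
    have hE : t * (G' * b) = G' * b * τ * (1 / Real.sqrt ((n:ℝ) + 1)) := by
      rw [htdef]; ring
    linarith [hdesc, A, B, T, hE]
  have hsum := Finset.sum_le_sum key
  rw [← Finset.mul_sum] at hsum
  -- bound the RHS sum
  have htel : ∑ n ∈ Finset.range N, (F (θ n) - F (θ (n + 1))) = F (θ 0) - F (θ N) :=
    Finset.sum_range_sub' (fun n => F (θ n)) N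
  have hrhs : ∑ n ∈ Finset.range N,
      ((F (θ n) - F (θ (n + 1))) + C * G ^ 2 * τ ^ 2 / 2 * (1 / ((n:ℝ) + 1))
        + G' * b * τ * (1 / Real.sqrt ((n:ℝ) + 1)))
      ≤ (F (θ 0) - Fstar) + C * G ^ 2 * τ ^ 2 / 2 * (Real.log N + 1)
        + G' * b * τ * (2 * Real.sqrt N) := by
    rw [Finset.sum_add_distrib, Finset.sum_add_distrib, htel, ← Finset.mul_sum, ← Finset.mul_sum]
    have h1 : F (θ 0) - F (θ N) ≤ F (θ 0) - Fstar := by linarith [hFstar (θ N)]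
    have h2 : C * G ^ 2 * τ ^ 2 / 2 * (∑ n ∈ Finset.range N, (1 / ((n:ℝ) + 1)))
        ≤ C * G ^ 2 * τ ^ 2 / 2 * (Real.log N + 1) :=
      mul_le_mul_of_nonneg_left (sum_inv_le_log N) (by positivity)
    have h3 : G' * b * τ * (∑ n ∈ Finset.range N, (1 / Real.sqrt ((n:ℝ) + 1)))
        ≤ G' * b * τ * (2 * Real.sqrt N) :=
      mul_le_mul_of_nonneg_left (sum_inv_sqrt_le N) (by positivity)
    linarith
  have hfinal : (τ / Real.sqrt N) * ∑ n ∈ Finset.range N, ‖F' (θ n)‖ ^ 2 ≤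
      (F (θ 0) - Fstar) + C * G ^ 2 * τ ^ 2 / 2 * (Real.log N + 1)
        + G' * b * τ * (2 * Real.sqrt N) := le_trans hsum hrhs
  set S := ∑ n ∈ Finset.range N, ‖F' (θ n)‖ ^ 2 with hS
  have hNs : Real.sqrt N * Real.sqrt N = (N:ℝ) := Real.mul_self_sqrt hNpos.le
  have e1 : (1 / (N:ℝ)) * S = ((τ / Real.sqrt N) * S) / (τ * Real.sqrt N) := by
    field_simp
    linear_combination S * hNs
  rw [e1]
  have e2 : ((F (θ 0) - Fstar) + C * G ^ 2 * τ ^ 2 / 2 * (Real.log N + 1)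
        + G' * b * τ * (2 * Real.sqrt N)) / (τ * Real.sqrt N)
      = (F (θ 0) - Fstar) / (τ * Real.sqrt N) +
          (C * G ^ 2 * τ / 2) * (Real.log N + 1) / Real.sqrt N + 2 * G' * b := by
    field_simp
  rw [← e2]
  exact div_le_div_of_nonneg_right hfinal (by positivity)
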